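/- Let m be a positive integer, F = GF(2^m), and t ≥ 1. Let x and e be binary m-tuples with e ≠ 0, identified with field elements x, e ∈ F, and let e_0, ..., e_{m-1} be the binary coordinates of e. Then (x⊕e) P^t(a) (x⊕e)ᵀ − x P^t(a) xᵀ ≡ 0 (mod 4) holds for every a ∈ F if and only if 1 + (x/e) + (x/e)^{2^t} + Σ_{j=0}^{m-1} e_j·(ξ^j/e)^{2^t+1} = 0 in F, where ⊕ denotes bitwise XOR. -/

import Mathlib

noncomputable section

namespace DGPaper

/-- The absolute trace `GF(2^m) → 𝔽₂`. -/
def tr {m : ℕ} (x : GaloisField 2 m) : ZMod 2 :=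
  Algebra.trace (ZMod 2) (GaloisField 2 m) x

/-- Lift a bit to `ℤ₄`. -/
def lift2 (v : ZMod 2) : ZMod 4 := (v.val : ZMod 4)

/-- `i^v` for `v ∈ ℤ₄`. -/
def zeta (v : ZMod 4) : ℂ := Complex.I ^ v.val

/-- The field element of `GF(2^m)` associated to a binary `m`-tuple via the basis
`1, ξ, …, ξ^{m-1}`. -/
def fld {m : ℕ} (ξ : GaloisField 2 m) (x : Fin m → ZMod 2) : GaloisField 2 m :=
  ∑ j : Fin m, x j • ξ ^ (j : ℕ)

/-- The binary symmetric matrix `P^t(a)`: for `t = 0` it represents the bilinear form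
`(x,y) ↦ Tr(x y a)`, and for `t ≥ 1` the (zero-diagonal) form
`(x,y) ↦ Tr((x y^{2^t} + x^{2^t} y) a)`, in the basis `1, ξ, …, ξ^{m-1}` of `GF(2^m)`
over `𝔽₂`. -/
def Pmat {m : ℕ} (ξ : GaloisField 2 m) (t : ℕ) (a : GaloisField 2 m) :
    Matrix (Fin m) (Fin m) (ZMod 2) :=
  Matrix.of fun i j =>
    if t = 0 then tr (ξ ^ (i : ℕ) * ξ ^ (j : ℕ) * a)
    else tr ((ξ ^ (i : ℕ) * (ξ ^ (j : ℕ)) ^ (2 ^ t) + (ξ ^ (i : ℕ)) ^ (2 ^ t) * ξ ^ (j : ℕ)) * a)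

/-- The quadratic form `x P xᵀ` evaluated in `ℤ₄` (the `0/1` entries of `P` and `x`
being lifted to `ℤ₄`). -/
def qform {m : ℕ} (P : Matrix (Fin m) (Fin m) (ZMod 2)) (x : Fin m → ZMod 2) : ZMod 4 :=
  ∑ i : Fin m, ∑ j : Fin m, lift2 (x i) * lift2 (P i j) * lift2 (x j)

instance {m : ℕ} : Fintype (GaloisField 2 m) := Fintype.ofFinite _

/-! ### Auxiliary lemmas -/

open Finset

/-- Doubling map `ℤ₂ →+ ℤ₄`. -/
def phi : ZMod 2 →+ ZMod 4 where
  toFun v := 2 * lift2 v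
  map_zero' := by decide
  map_add' := by decide

lemma phi_eq_zero (v : ZMod 2) : phi v = 0 ↔ v = 0 := by revert v; decide

lemma lift2_mul3 (a b c : ZMod 2) : lift2 (a * b * c) = lift2 a * lift2 b * lift2 c := by
  revert a b c; decide

lemma lift2_add_self (v : ZMod 2) : lift2 v + lift2 v = phi v := by revert v; decide

lemma key2 (a b c d p : ZMod 2) :
    (a + b) * p * (c + d) - a * p * c = a * p * d + b * p * c + b * p * d := by
  revert a b c d p; decide

lemma zmod2_sq (e : ZMod 2) : e * e = e := by revert e; decide

lemma zmod2_pow (e : ZMod 2) (n : ℕ) (hn : 0 < n) : e ^ n = e := by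
  induction n with
  | zero => omega
  | succ k ih =>
    rcases Nat.eq_zero_or_pos k with h | h
    · simp [h]
    · rw [pow_succ, ih h, zmod2_sq]

variable {m : ℕ}

lemma tr_smul (c : ZMod 2) (z : GaloisField 2 m) : tr (c • z) = c * tr z := by
  unfold tr; rw [map_smul, smul_eq_mul]

lemma tr_eq_zero_iff (c : GaloisField 2 m) : (∀ a, tr (c * a) = 0) ↔ c = 0 := by
  constructor
  · intro h
    refine (traceForm_nondegenerate (ZMod 2) (GaloisField 2 m)).1 c fun a => ?_
    rw [Algebra.traceForm_apply]; exact h a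
  · intro h a; simp [h, tr]

lemma frob_sum (e : Fin m → ZMod 2) (w : Fin m → GaloisField 2 m) (t : ℕ) :
    (∑ j : Fin m, e j • w j) ^ 2 ^ t = ∑ j : Fin m, e j • (w j) ^ 2 ^ t := by
  have := map_sum (iterateFrobenius (GaloisField 2 m) 2 t)
      (fun j : Fin m => e j • w j) Finset.univ
  simp only [iterateFrobenius_def] at this
  rw [this]
  refine Finset.sum_congr rfl fun j _ => ?_
  rw [smul_pow]
  congr 1
  exact zmod2_pow _ _ (pow_pos (by norm_num) t)

/-- The set of index pairs below the diagonal. -/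
def ltS (m : ℕ) : Finset (Fin m × Fin m) := univ.filter fun p => p.1 < p.2

/-- The set of index pairs above the diagonal. -/
def gtS (m : ℕ) : Finset (Fin m × Fin m) := univ.filter fun p => p.2 < p.1

lemma sum_swap_ltS {M : Type*} [AddCommMonoid M] (f : Fin m × Fin m → M) :
    ∑ p ∈ ltS m, f p.swap = ∑ p ∈ gtS m, f p := by
  refine Finset.sum_bij' (fun p _ => p.swap) (fun p _ => p.swap) ?_ ?_ ?_ ?_ ?_ <;>
    simp [ltS, gtS]

lemma sum_split {M : Type*} [AddCommMonoid M] (f : Fin m × Fin m → M) :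
    ∑ p : Fin m × Fin m, f p
      = (∑ p ∈ ltS m, f p) + (∑ p ∈ gtS m, f p) + ∑ i : Fin m, f (i, i) := by
  classical
  rw [← Finset.sum_filter_add_sum_filter_not univ (fun p : Fin m × Fin m => p.1 < p.2) f]
  rw [← Finset.sum_filter_add_sum_filter_not
      (univ.filter fun p : Fin m × Fin m => ¬ p.1 < p.2)
      (fun p : Fin m × Fin m => p.2 < p.1) f]
  rw [Finset.filter_filter, Finset.filter_filter]
  have h1 : (univ.filter fun p : Fin m × Fin m => ¬ p.1 < p.2 ∧ p.2 < p.1) = gtS m := by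
    apply Finset.filter_congr; intro p _; constructor
    · rintro ⟨_, h⟩; exact h
    · intro h; exact ⟨fun h' => absurd h (not_lt_of_gt h'), h⟩
  have h2 : ∑ p ∈ univ.filter (fun p : Fin m × Fin m => ¬ p.1 < p.2 ∧ ¬ p.2 < p.1), f p
      = ∑ i : Fin m, f (i, i) := by
    have hset : univ.filter (fun p : Fin m × Fin m => ¬ p.1 < p.2 ∧ ¬ p.2 < p.1)
        = univ.image (fun i : Fin m => (i, i)) := by
      ext p
      simp only [Finset.mem_filter, Finset.mem_univ, true_and, Finset.mem_image]
      constructor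
      · rintro ⟨h1, h2⟩
        exact ⟨p.1, Prod.ext rfl (le_antisymm (not_lt.mp h2) (not_lt.mp h1))⟩
      · rintro ⟨i, rfl⟩
        exact ⟨lt_irrefl i, lt_irrefl i⟩
    rw [hset, Finset.sum_image]
    intro i _ j _ h
    exact (Prod.ext_iff.mp h).1
  rw [h1, h2, add_assoc]
  rfl

/-- The `ℤ₄` quadratic form of a symmetric zero-diagonal matrix is twice the
strictly-lower `𝔽₂` quadratic form. -/
lemma qform_phi (P : Matrix (Fin m) (Fin m) (ZMod 2))
    (hsym : ∀ i j, P i j = P j i) (hdiag : ∀ i, P i i = 0) (y : Fin m → ZMod 2) :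
    qform P y = phi (∑ p ∈ ltS m, y p.1 * P p.1 p.2 * y p.2) := by
  have h0 : qform P y = ∑ p : Fin m × Fin m, lift2 (y p.1 * P p.1 p.2 * y p.2) := by
    rw [qform, Fintype.sum_prod_type]
    exact Finset.sum_congr rfl fun i _ => Finset.sum_congr rfl fun j _ => (lift2_mul3 _ _ _).symm
  rw [h0, sum_split]
  have hgt : ∑ p ∈ gtS m, lift2 (y p.1 * P p.1 p.2 * y p.2)
      = ∑ p ∈ ltS m, lift2 (y p.1 * P p.1 p.2 * y p.2) := by
    rw [← sum_swap_ltS (fun p => lift2 (y p.1 * P p.1 p.2 * y p.2))]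
    refine Finset.sum_congr rfl fun p _ => ?_
    simp only [Prod.fst_swap, Prod.snd_swap]
    congr 1
    rw [hsym p.2 p.1]; ring
  have hdg : ∑ i : Fin m, lift2 (y i * P i i * y i) = 0 := by
    refine Finset.sum_eq_zero fun i _ => ?_
    rw [hdiag i, mul_zero, zero_mul]
    rfl
  rw [hgt, hdg, add_zero, map_sum phi]
  rw [← Finset.sum_add_distrib]
  exact Finset.sum_congr rfl fun p _ => (lift2_add_self _)

/-- The key bilinearity computation for the trace. -/
lemma bilin (u v : Fin m → ZMod 2) (w z : Fin m → GaloisField 2 m) (a : GaloisField 2 m) :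
    ∑ i : Fin m, ∑ j : Fin m, u i * tr (w i * z j * a) * v j
      = tr ((∑ i : Fin m, u i • w i) * (∑ j : Fin m, v j • z j) * a) := by
  rw [Finset.sum_mul, Finset.sum_mul]
  unfold tr
  rw [map_sum]
  refine Finset.sum_congr rfl fun i _ => ?_
  rw [Finset.mul_sum, Finset.sum_mul, map_sum]
  refine Finset.sum_congr rfl fun j _ => ?_
  have : u i • w i * (v j • z j) * a = (u i * v j) • (w i * z j * a) := by
    rw [Algebra.smul_def, Algebra.smul_def, Algebra.smul_def, map_mul]; ring
  rw [this, map_smul, smul_eq_mul]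
  ring

lemma zmod2_sub (a b : ZMod 2) : a - b = a + b := by revert a b; decide

lemma qform_diff (P : Matrix (Fin m) (Fin m) (ZMod 2))
    (hsym : ∀ i j, P i j = P j i) (hdiag : ∀ i, P i i = 0) (x e : Fin m → ZMod 2) :
    qform P (x + e) - qform P x
      = phi ((∑ i : Fin m, ∑ j : Fin m, x i * P i j * e j)
          + ∑ p ∈ ltS m, e p.1 * P p.1 p.2 * e p.2) := by
  rw [qform_phi P hsym hdiag, qform_phi P hsym hdiag, ← map_sub phi,
    ← Finset.sum_sub_distrib]
  congr 1
  have step1 : ∀ p ∈ ltS m,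
      ((x + e) p.1 * P p.1 p.2 * (x + e) p.2 - x p.1 * P p.1 p.2 * x p.2)
        = (x p.1 * P p.1 p.2 * e p.2 + e p.1 * P p.1 p.2 * x p.2
            + e p.1 * P p.1 p.2 * e p.2) := by
    intro p _
    simp only [Pi.add_apply]
    rw [key2]
  rw [Finset.sum_congr rfl step1, Finset.sum_add_distrib, Finset.sum_add_distrib]
  congr 1
  have h2 : ∑ p ∈ ltS m, e p.1 * P p.1 p.2 * x p.2
      = ∑ p ∈ gtS m, x p.1 * P p.1 p.2 * e p.2 := by
    rw [← sum_swap_ltS (fun p => x p.1 * P p.1 p.2 * e p.2)]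
    refine Finset.sum_congr rfl fun p _ => ?_
    simp only [Prod.fst_swap, Prod.snd_swap]
    rw [hsym p.2 p.1]; ring
  rw [h2]
  have h3 := sum_split (fun p : Fin m × Fin m => x p.1 * P p.1 p.2 * e p.2)
  have hdg : ∑ i : Fin m, x i * P i i * e i = 0 :=
    Finset.sum_eq_zero fun i _ => by rw [hdiag i]; ring
  simp only [hdg, add_zero] at h3
  rw [← h3, Fintype.sum_prod_type]

lemma Pmat_sym (ξ : GaloisField 2 m) (t : ℕ) (a : GaloisField 2 m) (i j : Fin m) :
    Pmat ξ t a i j = Pmat ξ t a j i := by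
  unfold Pmat
  simp only [Matrix.of_apply]
  split <;> · unfold tr; congr 1; ring

lemma Pmat_diag (ξ : GaloisField 2 m) (t : ℕ) (ht : ¬ t = 0)
    (a : GaloisField 2 m) (i : Fin m) : Pmat ξ t a i i = 0 := by
  unfold Pmat
  simp only [Matrix.of_apply, if_neg ht]
  haveI : CharP (GaloisField 2 m) 2 := inferInstance
  have h0 : ξ ^ (i : ℕ) * (ξ ^ (i : ℕ)) ^ 2 ^ t + (ξ ^ (i : ℕ)) ^ 2 ^ t * ξ ^ (i : ℕ)
      = 0 := by
    rw [mul_comm]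
    exact CharTwo.add_self_eq_zero _
  rw [h0, zero_mul]
  unfold tr
  exact map_zero _

/-- The heart of the computation: the `𝔽₂` invariance defect equals a trace. -/
lemma arg_eq_tr (ξ : GaloisField 2 m) (t : ℕ) (ht : ¬ t = 0)
    (a : GaloisField 2 m) (x e : Fin m → ZMod 2) :
    (∑ i : Fin m, ∑ j : Fin m, x i * Pmat ξ t a i j * e j)
        + ∑ p ∈ ltS m, e p.1 * Pmat ξ t a p.1 p.2 * e p.2
      = tr (((∑ i : Fin m, x i • ξ ^ (i : ℕ)) * (∑ j : Fin m, e j • (ξ ^ (j : ℕ)) ^ 2 ^ t)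
          + (∑ i : Fin m, x i • (ξ ^ (i : ℕ)) ^ 2 ^ t) * (∑ j : Fin m, e j • ξ ^ (j : ℕ))
          + (∑ i : Fin m, e i • ξ ^ (i : ℕ)) * (∑ j : Fin m, e j • (ξ ^ (j : ℕ)) ^ 2 ^ t)
          + ∑ i : Fin m, e i • (ξ ^ (i : ℕ) * (ξ ^ (i : ℕ)) ^ 2 ^ t)) * a) := by
  have hP : ∀ i j : Fin m, Pmat ξ t a i j
      = tr (ξ ^ (i : ℕ) * (ξ ^ (j : ℕ)) ^ 2 ^ t * a)
        + tr ((ξ ^ (i : ℕ)) ^ 2 ^ t * ξ ^ (j : ℕ) * a) := by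
    intro i j
    unfold Pmat
    simp only [Matrix.of_apply, if_neg ht]
    unfold tr
    rw [add_mul, map_add]
  -- the bilinear part
  have hA : ∑ i : Fin m, ∑ j : Fin m, x i * Pmat ξ t a i j * e j
      = tr ((∑ i : Fin m, x i • ξ ^ (i : ℕ)) * (∑ j : Fin m, e j • (ξ ^ (j : ℕ)) ^ 2 ^ t) * a)
        + tr ((∑ i : Fin m, x i • (ξ ^ (i : ℕ)) ^ 2 ^ t) * (∑ j : Fin m, e j • ξ ^ (j : ℕ)) * a) := by
    have expand : ∀ i j : Fin m, x i * Pmat ξ t a i j * e j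
        = x i * tr (ξ ^ (i : ℕ) * (ξ ^ (j : ℕ)) ^ 2 ^ t * a) * e j
          + x i * tr ((ξ ^ (i : ℕ)) ^ 2 ^ t * ξ ^ (j : ℕ) * a) * e j := by
      intro i j; rw [hP i j]; ring
    calc ∑ i : Fin m, ∑ j : Fin m, x i * Pmat ξ t a i j * e j
        = ∑ i : Fin m, ∑ j : Fin m,
            (x i * tr (ξ ^ (i : ℕ) * (ξ ^ (j : ℕ)) ^ 2 ^ t * a) * e j
              + x i * tr ((ξ ^ (i : ℕ)) ^ 2 ^ t * ξ ^ (j : ℕ) * a) * e j) := by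
          exact Finset.sum_congr rfl fun i _ => Finset.sum_congr rfl fun j _ => expand i j
      _ = (∑ i : Fin m, ∑ j : Fin m, x i * tr (ξ ^ (i : ℕ) * (ξ ^ (j : ℕ)) ^ 2 ^ t * a) * e j)
          + ∑ i : Fin m, ∑ j : Fin m, x i * tr ((ξ ^ (i : ℕ)) ^ 2 ^ t * ξ ^ (j : ℕ) * a) * e j := by
          simp [Finset.sum_add_distrib]
      _ = _ := by
          rw [bilin x e (fun i : Fin m => ξ ^ (i : ℕ)) (fun j : Fin m => (ξ ^ (j : ℕ)) ^ 2 ^ t) a,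
            bilin x e (fun i : Fin m => (ξ ^ (i : ℕ)) ^ 2 ^ t) (fun j : Fin m => ξ ^ (j : ℕ)) a]
  -- the quadratic (e,e) part
  have hB : ∑ p ∈ ltS m, e p.1 * Pmat ξ t a p.1 p.2 * e p.2
      = tr ((∑ i : Fin m, e i • ξ ^ (i : ℕ)) * (∑ j : Fin m, e j • (ξ ^ (j : ℕ)) ^ 2 ^ t) * a)
        + tr ((∑ i : Fin m, e i • (ξ ^ (i : ℕ) * (ξ ^ (i : ℕ)) ^ 2 ^ t)) * a) := by
    set f : Fin m × Fin m → ZMod 2 :=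
      fun p => e p.1 * tr (ξ ^ (p.1 : ℕ) * (ξ ^ (p.2 : ℕ)) ^ 2 ^ t * a) * e p.2 with hf
    have expand : ∀ p ∈ ltS m, e p.1 * Pmat ξ t a p.1 p.2 * e p.2 = f p + f p.swap := by
      intro p _
      rw [hP p.1 p.2, hf]
      simp only [Prod.fst_swap, Prod.snd_swap]
      ring
    rw [Finset.sum_congr rfl expand, Finset.sum_add_distrib, sum_swap_ltS f]
    -- now : Σ_lt f + Σ_gt f
    have h3 := sum_split f
    have hDD : (∑ i : Fin m, f (i, i)) + (∑ i : Fin m, f (i, i)) = 0 := by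
      rw [← two_mul, show (2 : ZMod 2) = 0 by decide, zero_mul]
    have hlg : (∑ p ∈ ltS m, f p) + ∑ p ∈ gtS m, f p
        = (∑ p : Fin m × Fin m, f p) + ∑ i : Fin m, f (i, i) := by
      rw [h3, add_assoc, hDD, add_zero]
    rw [hlg]
    congr 1
    · -- full double sum is the trace of E * E^{2^t}
      rw [Fintype.sum_prod_type]
      exact bilin e e (fun i : Fin m => ξ ^ (i : ℕ)) (fun j : Fin m => (ξ ^ (j : ℕ)) ^ 2 ^ t) a
    · -- diagonal sum
      rw [Finset.sum_mul]
      unfold tr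
      rw [map_sum]
      refine Finset.sum_congr rfl fun i _ => ?_
      rw [hf]
      simp only
      rw [smul_mul_assoc, map_smul, smul_eq_mul, mul_right_comm, zmod2_sq]
      rfl
  rw [hA, hB]
  unfold tr
  rw [add_mul, add_mul, add_mul, map_add, map_add, map_add]
  abel

/-- For `t ≥ 1` and binary `m`-tuples `x`, `e` with `e ≠ 0`
(identified with field elements of `GF(2^m)`), the invariance
`(x ⊕ e) P^t(a) (x ⊕ e)ᵀ − x P^t(a) xᵀ ≡ 0 (mod 4)` holds for every `a ∈ GF(2^m)` if
and only if `1 + (x/e) + (x/e)^{2^t} + ∑_j e_j (ξ^j / e)^{2^t+1} = 0` in `GF(2^m)`. -/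
theorem dg_row_invariance_iff_field_equation
    (m t : ℕ) (hm : 0 < m) (ht : 1 ≤ t)
    (ξ : GaloisField 2 m)
    (hξ : LinearIndependent (ZMod 2) fun j : Fin m => ξ ^ (j : ℕ))
    (x e : Fin m → ZMod 2) (he : e ≠ 0) :
    (∀ a : GaloisField 2 m,
        qform (Pmat ξ t a) (x + e) - qform (Pmat ξ t a) x = 0) ↔
      1 + fld ξ x / fld ξ e + (fld ξ x / fld ξ e) ^ 2 ^ t +
          ∑ j : Fin m, e j • (ξ ^ (j : ℕ) / fld ξ e) ^ (2 ^ t + 1) = 0 := by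
  haveI : NeZero m := ⟨hm.ne'⟩
  have ht0 : ¬ t = 0 := by omega
  have hE : fld ξ e ≠ 0 := by
    intro h0
    apply he
    funext i
    refine Fintype.linearIndependent_iff.mp hξ e ?_ i
    unfold fld at h0
    exact h0
  set C : GaloisField 2 m :=
      fld ξ x * fld ξ e ^ 2 ^ t + fld ξ x ^ 2 ^ t * fld ξ e + fld ξ e ^ (2 ^ t + 1)
        + ∑ j : Fin m, e j • (ξ ^ (j : ℕ)) ^ (2 ^ t + 1) with hC
  have hdiagS : (∑ i : Fin m, e i • (ξ ^ (i : ℕ) * (ξ ^ (i : ℕ)) ^ 2 ^ t))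
      = ∑ j : Fin m, e j • (ξ ^ (j : ℕ)) ^ (2 ^ t + 1) := by
    refine Finset.sum_congr rfl fun i _ => ?_
    congr 1
    rw [pow_succ]
    exact mul_comm _ _
  have step : ∀ a, qform (Pmat ξ t a) (x + e) - qform (Pmat ξ t a) x
      = phi (tr (C * a)) := by
    intro a
    rw [qform_diff _ (Pmat_sym ξ t a) (Pmat_diag ξ t ht0 a) x e, arg_eq_tr ξ t ht0 a x e]
    congr 2
    rw [hC]
    unfold fld
    rw [show (∑ j : Fin m, e j • (ξ ^ (j : ℕ)) ^ 2 ^ t)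
        = (∑ j : Fin m, e j • ξ ^ (j : ℕ)) ^ 2 ^ t from
      (frob_sum e (fun j : Fin m => ξ ^ (j : ℕ)) t).symm]
    rw [show (∑ j : Fin m, x j • (ξ ^ (j : ℕ)) ^ 2 ^ t)
        = (∑ j : Fin m, x j • ξ ^ (j : ℕ)) ^ 2 ^ t from
      (frob_sum x (fun j : Fin m => ξ ^ (j : ℕ)) t).symm]
    rw [hdiagS]
    ring
  have hiff1 : (∀ a : GaloisField 2 m,
      qform (Pmat ξ t a) (x + e) - qform (Pmat ξ t a) x = 0) ↔ C = 0 := by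
    constructor
    · intro H
      refine (tr_eq_zero_iff C).mp fun a => (phi_eq_zero _).mp ?_
      rw [← step a]
      exact H a
    · intro H a
      rw [step a, H, zero_mul]
      have h0 : tr (0 : GaloisField 2 m) = 0 := by unfold tr; exact map_zero _
      rw [h0]
      exact map_zero phi
  rw [hiff1]
  have h1 : fld ξ x / fld ξ e * fld ξ e ^ (2 ^ t + 1) = fld ξ x * fld ξ e ^ 2 ^ t := by
    rw [pow_succ', ← mul_assoc, div_mul_cancel₀ _ hE]
  have h2 : (fld ξ x / fld ξ e) ^ 2 ^ t * fld ξ e ^ (2 ^ t + 1)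
      = fld ξ x ^ 2 ^ t * fld ξ e := by
    rw [div_pow, pow_succ, ← mul_assoc, div_mul_cancel₀ _ (pow_ne_zero _ hE)]
  have h3 : (∑ j : Fin m, e j • (ξ ^ (j : ℕ) / fld ξ e) ^ (2 ^ t + 1))
      * fld ξ e ^ (2 ^ t + 1)
      = ∑ j : Fin m, e j • (ξ ^ (j : ℕ)) ^ (2 ^ t + 1) := by
    rw [Finset.sum_mul]
    refine Finset.sum_congr rfl fun j _ => ?_
    rw [smul_mul_assoc, div_pow, div_mul_cancel₀ _ (pow_ne_zero _ hE)]
  have key : (1 + fld ξ x / fld ξ e + (fld ξ x / fld ξ e) ^ 2 ^ t +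
        ∑ j : Fin m, e j • (ξ ^ (j : ℕ) / fld ξ e) ^ (2 ^ t + 1))
      * fld ξ e ^ (2 ^ t + 1) = C := by
    rw [add_mul, add_mul, add_mul, one_mul, h1, h2, h3, hC]
    ring
  constructor
  · intro hC0
    rcases mul_eq_zero.mp (key.trans hC0) with h | h
    · exact h
    · exact absurd h (pow_ne_zero _ hE)
  · intro hR0
    rw [← key, hR0, zero_mul]


end DGPaper
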